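/- arXiv:2510.15817 — 2 statements merged into one kernel-verified Lean document; each statement's English description precedes it below -/
import Mathlib

section
/- Let p and p̃ be probability distributions on ℝ^d with finite second moments and covariance matrices Σ and Σ̃ respectively. If the 2-Wasserstein distance satisfies W₂(p, p̃) ≤ η with 0 < η < √(‖Σ‖/2) (spectral norm), then ‖Σ − Σ̃‖ ≤ (2√2·η·‖Σ‖^{1/2} + η²(√2+1)) · ‖Σ‖^{1/2}/(‖Σ‖^{1/2} − √2·η). -/
open MeasureTheory
open scoped Matrix.Norms.L2Operator

/-- The mean vector of a probability measure on `ℝ^d`. -/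
noncomputable def measureMean {d : ℕ} (p : Measure (EuclideanSpace ℝ (Fin d))) (i : Fin d) : ℝ :=
  ∫ x, x i ∂p

/-- The covariance matrix of a probability measure on `ℝ^d`. -/
noncomputable def covMatrix {d : ℕ} (p : Measure (EuclideanSpace ℝ (Fin d))) :
    Matrix (Fin d) (Fin d) ℝ :=
  Matrix.of fun i j => ∫ x, (x i - measureMean p i) * (x j - measureMean p j) ∂p

/-- The 2-Wasserstein distance between two measures on `ℝ^d` (Euclidean metric), defined as the
infimum over couplings of the square root of the second-moment transport cost. -/
noncomputable def W2 {d : ℕ} (p q : Measure (EuclideanSpace ℝ (Fin d))) : ℝ :=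
  sInf { r : ℝ | 0 ≤ r ∧
    ∃ π : Measure (EuclideanSpace ℝ (Fin d) × EuclideanSpace ℝ (Fin d)),
      π.map Prod.fst = p ∧ π.map Prod.snd = q ∧
      (∫ z, ‖z.1 - z.2‖ ^ 2 ∂π) = r ^ 2 }

open scoped RealInnerProductSpace

lemma quadform_le_opNorm (A : Matrix (Fin d) (Fin d) ℝ) (u : EuclideanSpace ℝ (Fin d)) :
    |⟪u, Matrix.toEuclideanLin A u⟫| ≤ ‖A‖ * ‖u‖ ^ 2 := by
  calc |⟪u, Matrix.toEuclideanLin A u⟫| ≤ ‖u‖ * ‖Matrix.toEuclideanLin A u‖ :=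
        abs_real_inner_le_norm _ _
    _ ≤ ‖u‖ * (‖A‖ * ‖u‖) := by
        refine mul_le_mul_of_nonneg_left ?_ (norm_nonneg _)
        simpa [Matrix.toEuclideanLin_apply] using A.l2_opNorm_mulVec u
    _ = ‖A‖ * ‖u‖ ^ 2 := by ring

lemma opNorm_le_of_quadform (A : Matrix (Fin d) (Fin d) ℝ) (hA : A.IsHermitian) {C : ℝ}
    (hC : 0 ≤ C)
    (h : ∀ u : EuclideanSpace ℝ (Fin d), ‖u‖ = 1 → |⟪u, Matrix.toEuclideanLin A u⟫| ≤ C) :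
    ‖A‖ ≤ C := by
  have hsymm : (Matrix.toEuclideanLin A).IsSymmetric :=
    (Matrix.isHermitian_iff_isSymmetric).mp hA
  set T := Matrix.toEuclideanLin A with hT
  have hq : ∀ u : EuclideanSpace ℝ (Fin d), |⟪u, T u⟫| ≤ C * ‖u‖ ^ 2 := by
    intro u
    rcases eq_or_ne u 0 with rfl | hu
    · simp
    · have hn : (0:ℝ) < ‖u‖ := norm_pos_iff.mpr hu
      have h1 := h (‖u‖⁻¹ • u) (by simp [norm_smul, inv_mul_cancel₀ hn.ne'])
      rw [LinearMap.map_smul] at h1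
      simp only [inner_smul_left, inner_smul_right, RCLike.star_def, map_inv₀,
        conj_trivial] at h1
      rw [abs_mul, abs_mul, abs_inv, abs_norm] at h1
      have h2 : ‖u‖⁻¹ * (‖u‖⁻¹ * |⟪u, T u⟫|) ≤ C := h1
      calc |⟪u, T u⟫| = ‖u‖ * (‖u‖ * (‖u‖⁻¹ * (‖u‖⁻¹ * |⟪u, T u⟫|))) := by
            field_simp
        _ ≤ ‖u‖ * (‖u‖ * C) := by
            refine mul_le_mul_of_nonneg_left (mul_le_mul_of_nonneg_left h2 hn.le) hn.le
        _ = C * ‖u‖ ^ 2 := by ring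
  have hTx : ∀ x : EuclideanSpace ℝ (Fin d), ‖x‖ = 1 → ‖T x‖ ≤ C := by
    intro x hx
    rcases eq_or_ne (T x) 0 with h0 | h0
    · simp [h0, hC]
    · have ht : (0:ℝ) < ‖T x‖ := norm_pos_iff.mpr h0
      set y : EuclideanSpace ℝ (Fin d) := ‖T x‖⁻¹ • T x with hy
      have hny : ‖y‖ = 1 := by simp [hy, norm_smul, inv_mul_cancel₀ ht.ne']
      have hip : ⟪y, T x⟫ = ‖T x‖ := by
        rw [hy, real_inner_smul_left, real_inner_self_eq_norm_mul_norm]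
        field_simp
      have hsy : ⟪x, T y⟫ = ⟪y, T x⟫ := by
        rw [← hsymm x y, real_inner_comm]
      have hpolar : 4 * ⟪y, T x⟫ = ⟪x + y, T (x + y)⟫ - ⟪x - y, T (x - y)⟫ := by
        simp only [map_add, map_sub, inner_add_left, inner_add_right, inner_sub_left,
          inner_sub_right]
        linarith [hsy]
      have q1 := hq (x + y)
      have q2 := hq (x - y)
      have hpar := parallelogram_law_with_norm ℝ x y
      have e1 : ‖x + y‖ ^ 2 = ‖x + y‖ * ‖x + y‖ := sq (‖x + y‖)
      have e2 : ‖x - y‖ ^ 2 = ‖x - y‖ * ‖x - y‖ := sq (‖x - y‖)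
      have e3 : ‖x‖ * ‖x‖ = 1 := by rw [hx]; ring
      have e4 : ‖y‖ * ‖y‖ = 1 := by rw [hny]; ring
      have s4 : ‖x + y‖ ^ 2 + ‖x - y‖ ^ 2 = 4 := by rw [e1, e2]; linarith
      have e5 : C * ‖x + y‖ ^ 2 + C * ‖x - y‖ ^ 2 = 4 * C := by rw [← mul_add, s4]; ring
      linarith [le_abs_self ⟪x + y, T (x + y)⟫, neg_abs_le ⟪x - y, T (x - y)⟫, q1, q2]
  rw [Matrix.l2_opNorm_def]
  refine ContinuousLinearMap.opNorm_le_bound _ hC fun x => ?_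
  show ‖T x‖ ≤ C * ‖x‖
  rcases eq_or_ne x 0 with rfl | hx0
  · simp
  · have hn : (0:ℝ) < ‖x‖ := norm_pos_iff.mpr hx0
    have := hTx (‖x‖⁻¹ • x) (by simp [norm_smul, inv_mul_cancel₀ hn.ne'])
    rw [LinearMap.map_smul, norm_smul] at this
    simp only [norm_inv, norm_norm] at this
    calc ‖T x‖ = ‖x‖ * (‖x‖⁻¹ * ‖T x‖) := by field_simp
      _ ≤ ‖x‖ * C := mul_le_mul_of_nonneg_left this hn.le
      _ = C * ‖x‖ := mul_comm _ _

section helpers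
variable {α : Type*} [MeasurableSpace α] {μ : Measure α}

lemma sq_diff_abs_le {a b s r : ℝ} (ha0 : 0 ≤ a) (hb0 : 0 ≤ b) (hs0 : 0 ≤ s) (hr : 0 ≤ r)
    (has : a ≤ s) (habs : |a - b| ≤ r) : |a ^ 2 - b ^ 2| ≤ 2 * r * s + r ^ 2 := by
  have e1 := (abs_le.mp habs).1
  have e2 := (abs_le.mp habs).2
  rw [abs_le]
  constructor <;> nlinarith

lemma le_of_sq_le_sq'' {a r : ℝ} (ha : 0 ≤ a) (hr : 0 ≤ r) (h : a ^ 2 ≤ r ^ 2) : a ≤ r := by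
  nlinarith

lemma memL2_mul_integrable {f g : α → ℝ} (hf : MemLp f 2 μ) (hg : MemLp g 2 μ) :
    Integrable (fun x => f x * g x) μ := by
  have h : MemLp (g • f) 1 μ := hf.smul hg
  rw [← memLp_one_iff_integrable]
  convert h using 1
  ext x
  simp [mul_comm]

lemma norm_toLp_sq {f : α → ℝ} (hf : MemLp f 2 μ) :
    ‖hf.toLp f‖ ^ 2 = ∫ x, f x ^ 2 ∂μ := by
  have h := MeasureTheory.L2.inner_def (𝕜 := ℝ) (hf.toLp f) (hf.toLp f)
  rw [real_inner_self_eq_norm_sq] at h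
  rw [h]
  refine integral_congr_ae ?_
  filter_upwards [hf.coeFn_toLp] with x hx
  simp [hx, RCLike.inner_apply, sq]

end helpers

section euclid
variable {d : ℕ} {ν : Measure (EuclideanSpace ℝ (Fin d))}

lemma coord_memL2 (hν : MemLp id 2 ν) (i : Fin d) :
    MemLp (fun x : EuclideanSpace ℝ (Fin d) => x i) 2 ν := by
  have := hν.const_inner (𝕜 := ℝ) (EuclideanSpace.single i (1:ℝ))
  simpa [EuclideanSpace.inner_single_left] using this

lemma inner_eq_sum (u x : EuclideanSpace ℝ (Fin d)) : ⟪u, x⟫ = ∑ i, u i * x i := by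
  simp [PiLp.inner_apply, RCLike.inner_apply, conj_trivial, mul_comm]

lemma integral_inner_eq [IsProbabilityMeasure ν] (hν : MemLp id 2 ν)
    (u : EuclideanSpace ℝ (Fin d)) :
    ∫ x, ⟪u, x⟫ ∂ν = ∑ i, u i * measureMean ν i := by
  simp_rw [inner_eq_sum]
  rw [integral_finset_sum _ (fun i _ => ((coord_memL2 hν i).integrable one_le_two).const_mul (u i))]
  simp_rw [integral_const_mul]
  rfl

lemma covMatrix_isHermitian (ν : Measure (EuclideanSpace ℝ (Fin d))) :
    (covMatrix ν).IsHermitian := by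
  ext i j
  simp only [Matrix.conjTranspose_apply, covMatrix, Matrix.of_apply, star_trivial]
  exact integral_congr_ae (Filter.Eventually.of_forall fun x => mul_comm _ _)

lemma quadform_eq_integral [IsProbabilityMeasure ν] (hν : MemLp id 2 ν)
    (u : EuclideanSpace ℝ (Fin d)) :
    ⟪u, Matrix.toEuclideanLin (covMatrix ν) u⟫
      = ∫ x, (⟪u, x⟫ - ∫ y, ⟪u, y⟫ ∂ν) ^ 2 ∂ν := by
  have hint : ∀ i j : Fin d, Integrable (fun x : EuclideanSpace ℝ (Fin d) =>
      (u i * u j) * ((x i - measureMean ν i) * (x j - measureMean ν j))) ν := by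
    intro i j
    exact (memL2_mul_integrable ((coord_memL2 hν i).sub (memLp_const _))
      ((coord_memL2 hν j).sub (memLp_const _))).const_mul _
  have key : ∀ x : EuclideanSpace ℝ (Fin d), (⟪u, x⟫ - ∫ y, ⟪u, y⟫ ∂ν) ^ 2
      = ∑ i, ∑ j, (u i * u j) * ((x i - measureMean ν i) * (x j - measureMean ν j)) := by
    intro x
    rw [inner_eq_sum, integral_inner_eq hν]
    have e : ∑ i, u i * x i - ∑ i, u i * measureMean ν i
        = ∑ i, u i * (x i - measureMean ν i) := by
      rw [← Finset.sum_sub_distrib]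
      exact Finset.sum_congr rfl fun i _ => (mul_sub _ _ _).symm
    rw [e, sq, Finset.sum_mul_sum]
    exact Finset.sum_congr rfl fun i _ => Finset.sum_congr rfl fun j _ => by ring
  simp_rw [key]
  rw [integral_finset_sum _ (fun i _ => integrable_finset_sum _ (fun j _ => hint i j))]
  have : ∀ i, ∫ x, ∑ j, (u i * u j) * ((x i - measureMean ν i) * (x j - measureMean ν j)) ∂ν
      = ∑ j, (u i * u j) * covMatrix ν i j := by
    intro i
    rw [integral_finset_sum _ (fun j _ => hint i j)]
    exact Finset.sum_congr rfl fun j _ => integral_const_mul _ _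
  simp_rw [this]
  rw [inner_eq_sum]
  refine Finset.sum_congr rfl fun i _ => ?_
  have : Matrix.toEuclideanLin (covMatrix ν) u i = ∑ j, covMatrix ν i j * u j := rfl
  rw [this, Finset.mul_sum]
  exact Finset.sum_congr rfl fun j _ => by ring

end euclid

section coupling
variable {d : ℕ}

lemma cov_diff_bound (p q : Measure (EuclideanSpace ℝ (Fin d)))
    [IsProbabilityMeasure p] [IsProbabilityMeasure q]
    (hp : MemLp id 2 p) (hq : MemLp id 2 q) (r : ℝ) (hr : 0 ≤ r)
    (π : Measure (EuclideanSpace ℝ (Fin d) × EuclideanSpace ℝ (Fin d)))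
    (hfst : π.map Prod.fst = p) (hsnd : π.map Prod.snd = q)
    (hcost : (∫ z, ‖z.1 - z.2‖ ^ 2 ∂π) = r ^ 2) :
    ‖covMatrix p - covMatrix q‖ ≤ 2 * r * Real.sqrt ‖covMatrix p‖ + r ^ 2 := by
  set s := Real.sqrt ‖covMatrix p‖ with hs
  have hs0 : 0 ≤ s := Real.sqrt_nonneg _
  haveI : IsProbabilityMeasure π := by
    constructor
    rw [← Set.preimage_univ (f := Prod.fst),
      ← Measure.map_apply measurable_fst MeasurableSet.univ, hfst]
    exact measure_univ
  -- transfer of MemLp and integrals through marginals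
  have hid1 : MemLp (fun z : EuclideanSpace ℝ (Fin d) × EuclideanSpace ℝ (Fin d) => z.1) 2 π := by
    have hm : AEStronglyMeasurable (id : EuclideanSpace ℝ (Fin d) → EuclideanSpace ℝ (Fin d))
        (Measure.map Prod.fst π) := by rw [hfst]; exact hp.aestronglyMeasurable
    have := (memLp_map_measure_iff hm measurable_fst.aemeasurable).mp (by rw [hfst]; exact hp)
    simpa [Function.comp] using this
  have hid2 : MemLp (fun z : EuclideanSpace ℝ (Fin d) × EuclideanSpace ℝ (Fin d) => z.2) 2 π := by
    have hm : AEStronglyMeasurable (id : EuclideanSpace ℝ (Fin d) → EuclideanSpace ℝ (Fin d))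
        (Measure.map Prod.snd π) := by rw [hsnd]; exact hq.aestronglyMeasurable
    have := (memLp_map_measure_iff hm measurable_snd.aemeasurable).mp (by rw [hsnd]; exact hq)
    simpa [Function.comp] using this
  have hint1 : ∀ f : EuclideanSpace ℝ (Fin d) → ℝ, AEStronglyMeasurable f p →
      ∫ x, f x ∂p = ∫ z, f z.1 ∂π := by
    intro f hf
    rw [← hfst] at hf ⊢
    rw [integral_map measurable_fst.aemeasurable hf]
  have hint2 : ∀ f : EuclideanSpace ℝ (Fin d) → ℝ, AEStronglyMeasurable f q →
      ∫ x, f x ∂q = ∫ z, f z.2 ∂π := by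
    intro f hf
    rw [← hsnd] at hf ⊢
    rw [integral_map measurable_snd.aemeasurable hf]
  have hmemq1 : ∀ f : EuclideanSpace ℝ (Fin d) → ℝ, MemLp f 2 p →
      MemLp (fun z : EuclideanSpace ℝ (Fin d) × EuclideanSpace ℝ (Fin d) => f z.1) 2 π := by
    intro f hf
    have hm : AEStronglyMeasurable f (Measure.map Prod.fst π) := by
      rw [hfst]; exact hf.aestronglyMeasurable
    exact (memLp_map_measure_iff hm measurable_fst.aemeasurable).mp (by rw [hfst]; exact hf)
  have hmemq2 : ∀ f : EuclideanSpace ℝ (Fin d) → ℝ, MemLp f 2 q →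
      MemLp (fun z : EuclideanSpace ℝ (Fin d) × EuclideanSpace ℝ (Fin d) => f z.2) 2 π := by
    intro f hf
    have hm : AEStronglyMeasurable f (Measure.map Prod.snd π) := by
      rw [hsnd]; exact hf.aestronglyMeasurable
    exact (memLp_map_measure_iff hm measurable_snd.aemeasurable).mp (by rw [hsnd]; exact hf)
  -- apply the quadratic form criterion
  refine opNorm_le_of_quadform _ ((covMatrix_isHermitian p).sub (covMatrix_isHermitian q))
    (add_nonneg (mul_nonneg (mul_nonneg two_pos.le hr) hs0) (sq_nonneg r)) ?_
  intro u hu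
  set mp := ∫ y, ⟪u, y⟫ ∂p with hmp
  set mq := ∫ y, ⟪u, y⟫ ∂q with hmq
  set gp : EuclideanSpace ℝ (Fin d) → ℝ := fun x => ⟪u, x⟫ - mp with hgp_def
  set gq : EuclideanSpace ℝ (Fin d) → ℝ := fun x => ⟪u, x⟫ - mq with hgq_def
  have hgp : MemLp gp 2 p := by
    have := (hp.const_inner (𝕜 := ℝ) u).sub (memLp_const mp)
    exact this
  have hgq : MemLp gq 2 q := by
    have := (hq.const_inner (𝕜 := ℝ) u).sub (memLp_const mq)
    exact this
  have hGp : MemLp (fun z : EuclideanSpace ℝ (Fin d) × EuclideanSpace ℝ (Fin d) => gp z.1) 2 π :=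
    hmemq1 _ hgp
  have hGq : MemLp (fun z : EuclideanSpace ℝ (Fin d) × EuclideanSpace ℝ (Fin d) => gq z.2) 2 π :=
    hmemq2 _ hgq
  set FG := hGp.toLp _ with hFG
  set FH := hGq.toLp _ with hFH
  -- identify the quadratic form with a difference of squares of L² norms
  have hQp : ⟪u, Matrix.toEuclideanLin (covMatrix p) u⟫ = ‖FG‖ ^ 2 := by
    rw [quadform_eq_integral hp u, hFG, norm_toLp_sq hGp]
    exact hint1 _ (hgp.integrable_sq).aestronglyMeasurable
  have hQq : ⟪u, Matrix.toEuclideanLin (covMatrix q) u⟫ = ‖FH‖ ^ 2 := by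
    rw [quadform_eq_integral hq u, hFH, norm_toLp_sq hGq]
    exact hint2 _ (hgq.integrable_sq).aestronglyMeasurable
  have hQ : ⟪u, Matrix.toEuclideanLin (covMatrix p - covMatrix q) u⟫ = ‖FG‖ ^ 2 - ‖FH‖ ^ 2 := by
    rw [map_sub, LinearMap.sub_apply, inner_sub_right, hQp, hQq]
  rw [hQ]
  -- bound the L² distance between the two coupled variables
  have hdiff : ‖FG - FH‖ ^ 2 = ∫ z, (gp z.1 - gq z.2) ^ 2 ∂π := by
    rw [hFG, hFH, ← MemLp.toLp_sub, norm_toLp_sq]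
    exact integral_congr_ae (Filter.Eventually.of_forall fun z => by simp [Pi.sub_apply])
  set φ : EuclideanSpace ℝ (Fin d) × EuclideanSpace ℝ (Fin d) → ℝ :=
    fun z => ⟪u, z.1 - z.2⟫ with hφ_def
  have hsub : MemLp (fun z : EuclideanSpace ℝ (Fin d) × EuclideanSpace ℝ (Fin d) =>
      z.1 - z.2) 2 π := hid1.sub hid2
  have hφ : MemLp φ 2 π := by
    have := hsub.const_inner (𝕜 := ℝ) u
    simpa [hφ_def] using this
  have hφint : Integrable φ π := hφ.integrable one_le_two
  have hc : ∫ z, φ z ∂π = mp - mq := by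
    have h1 : Integrable (fun z : EuclideanSpace ℝ (Fin d) × EuclideanSpace ℝ (Fin d) =>
        ⟪u, z.1⟫) π := (hid1.const_inner (𝕜 := ℝ) u).integrable one_le_two
    have h2 : Integrable (fun z : EuclideanSpace ℝ (Fin d) × EuclideanSpace ℝ (Fin d) =>
        ⟪u, z.2⟫) π := (hid2.const_inner (𝕜 := ℝ) u).integrable one_le_two
    have e : ∀ z : EuclideanSpace ℝ (Fin d) × EuclideanSpace ℝ (Fin d),
        φ z = ⟪u, z.1⟫ - ⟪u, z.2⟫ := fun z => inner_sub_right _ _ _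
    have ham1 : AEStronglyMeasurable (fun x : EuclideanSpace ℝ (Fin d) => ⟪u, x⟫) p :=
      (hp.const_inner (𝕜 := ℝ) u).aestronglyMeasurable
    have ham2 : AEStronglyMeasurable (fun x : EuclideanSpace ℝ (Fin d) => ⟪u, x⟫) q :=
      (hq.const_inner (𝕜 := ℝ) u).aestronglyMeasurable
    rw [integral_congr_ae (Filter.Eventually.of_forall e), integral_sub h1 h2, hmp, hmq,
      hint1 _ ham1, hint2 _ ham2]
  have hpoint : ∀ z : EuclideanSpace ℝ (Fin d) × EuclideanSpace ℝ (Fin d),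
      gp z.1 - gq z.2 = φ z - (mp - mq) := by
    intro z
    simp only [hgp_def, hgq_def, hφ_def, inner_sub_right]
    ring
  have hφsq : Integrable (fun z => φ z ^ 2) π := hφ.integrable_sq
  have hexp : ∫ z, (φ z - (mp - mq)) ^ 2 ∂π = (∫ z, φ z ^ 2 ∂π) - (mp - mq) ^ 2 := by
    have e : ∀ z, (φ z - (mp - mq)) ^ 2
        = φ z ^ 2 - (2 * (mp - mq)) * φ z + (mp - mq) ^ 2 := fun z => by ring
    have i2 : Integrable (fun z => 2 * (mp - mq) * φ z) π := hφint.const_mul _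
    have i1 : Integrable (fun z => φ z ^ 2 - 2 * (mp - mq) * φ z) π := hφsq.sub i2
    rw [integral_congr_ae (Filter.Eventually.of_forall e),
      integral_add i1 (integrable_const _), integral_sub hφsq i2, integral_const_mul, hc,
      integral_const]
    simp only [measure_univ, ENNReal.toReal_one, probReal_univ, smul_eq_mul, one_mul]
    ring
  have hnormsq_int : Integrable
      (fun z : EuclideanSpace ℝ (Fin d) × EuclideanSpace ℝ (Fin d) => ‖z.1 - z.2‖ ^ 2) π := by
    have := (hsub.norm).integrable_sq
    simpa using this
  have hφ_le : ∫ z, φ z ^ 2 ∂π ≤ r ^ 2 := by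
    rw [← hcost]
    refine integral_mono hφsq hnormsq_int fun z => ?_
    have h := abs_real_inner_le_norm u (z.1 - z.2)
    rw [hu, one_mul] at h
    calc φ z ^ 2 = |φ z| ^ 2 := (sq_abs _).symm
      _ ≤ ‖z.1 - z.2‖ ^ 2 := by nlinarith [abs_nonneg (φ z)]
  have hD : ‖FG - FH‖ ^ 2 ≤ r ^ 2 := by
    rw [hdiff, integral_congr_ae (Filter.Eventually.of_forall fun z => by rw [hpoint z]), hexp]
    nlinarith [sq_nonneg (mp - mq)]
  have hFGH : ‖FG - FH‖ ≤ r := le_of_sq_le_sq'' (norm_nonneg _) hr hD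
  have ha : ‖FG‖ ≤ s := by
    have h1 := quadform_le_opNorm (covMatrix p) u
    rw [hQp, hu, one_pow, mul_one] at h1
    have h2 : ‖FG‖ ^ 2 ≤ s ^ 2 := by
      rw [hs, Real.sq_sqrt (norm_nonneg _)]
      exact (le_abs_self _).trans h1
    exact le_of_sq_le_sq'' (norm_nonneg _) hs0 h2
  exact sq_diff_abs_le (norm_nonneg FG) (norm_nonneg FH) hs0 hr ha
    ((abs_norm_sub_norm_le FG FH).trans hFGH)

end coupling

/-- If `W₂(p, p̃) ≤ η` with `0 < η < √(‖Σ‖/2)`, then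
`‖Σ − Σ̃‖ ≤ (2√2 η ‖Σ‖^{1/2} + η²(√2+1)) · ‖Σ‖^{1/2}/(‖Σ‖^{1/2} − √2 η)` (spectral norm). -/
theorem covariance_wasserstein_bound {d : ℕ}
    (p q : Measure (EuclideanSpace ℝ (Fin d)))
    [IsProbabilityMeasure p] [IsProbabilityMeasure q]
    (hp : MemLp id 2 p) (hq : MemLp id 2 q)
    (η : ℝ) (hη0 : 0 < η) (hη : η < Real.sqrt (‖covMatrix p‖ / 2))
    (hW : W2 p q ≤ η) :
    ‖covMatrix p - covMatrix q‖ ≤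
      (2 * Real.sqrt 2 * η * Real.sqrt ‖covMatrix p‖ + η ^ 2 * (Real.sqrt 2 + 1)) *
        (Real.sqrt ‖covMatrix p‖ / (Real.sqrt ‖covMatrix p‖ - Real.sqrt 2 * η)) := by
  set s := Real.sqrt ‖covMatrix p‖ with hs
  have hs0 : 0 ≤ s := Real.sqrt_nonneg _
  unfold W2 at hW
  have hSne : { r : ℝ | 0 ≤ r ∧
      ∃ π : Measure (EuclideanSpace ℝ (Fin d) × EuclideanSpace ℝ (Fin d)),
        π.map Prod.fst = p ∧ π.map Prod.snd = q ∧
        (∫ z, ‖z.1 - z.2‖ ^ 2 ∂π) = r ^ 2 }.Nonempty := by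
    refine ⟨Real.sqrt (∫ z, ‖z.1 - z.2‖ ^ 2 ∂(p.prod q)), Real.sqrt_nonneg _, p.prod q, ?_, ?_, ?_⟩
    · simp
    · simp
    · rw [Real.sq_sqrt (integral_nonneg fun z => sq_nonneg _)]
  have hkey : ∀ δ : ℝ, 0 < δ →
      ‖covMatrix p - covMatrix q‖ ≤ 2 * (η + δ) * s + (η + δ) ^ 2 := by
    intro δ hδ
    obtain ⟨r, hrS, hrlt⟩ :=
      exists_lt_of_csInf_lt hSne (lt_of_le_of_lt hW (lt_add_of_pos_right η hδ))
    obtain ⟨hr0, π, hfst, hsnd, hcost⟩ := hrS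
    have hb := cov_diff_bound p q hp hq r hr0 π hfst hsnd hcost
    have h2 : 2 * r * s + r ^ 2 ≤ 2 * (η + δ) * s + (η + δ) ^ 2 := by nlinarith
    rw [← hs] at hb
    linarith
  have hmain : ‖covMatrix p - covMatrix q‖ ≤ 2 * η * s + η ^ 2 := by
    by_contra hcon
    push_neg at hcon
    set ε := ‖covMatrix p - covMatrix q‖ - (2 * η * s + η ^ 2) with hε
    have hε0 : 0 < ε := by simp only [hε]; linarith
    have hc : (0:ℝ) < 2 * (2 * s + 2 * η + 1) := by nlinarith
    set δ := min 1 (ε / (2 * (2 * s + 2 * η + 1))) with hδdef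
    have hδ0 : 0 < δ := lt_min one_pos (div_pos hε0 hc)
    have hδ1 : δ ≤ 1 := min_le_left _ _
    have hδ2 : δ * (2 * (2 * s + 2 * η + 1)) ≤ ε :=
      (le_div_iff₀ hc).mp (min_le_right _ _)
    nlinarith [hkey δ hδ0, mul_le_mul_of_nonneg_left hδ1 hδ0.le,
      mul_nonneg hδ0.le hs0, mul_nonneg hδ0.le hη0.le]
  have hsqrt2 : (1:ℝ) ≤ Real.sqrt 2 := by
    rw [show (1:ℝ) = Real.sqrt 1 from Real.sqrt_one.symm]
    exact Real.sqrt_le_sqrt one_le_two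
  have hsqrt2' : (0:ℝ) < Real.sqrt 2 := by linarith
  have h2 : Real.sqrt 2 * η < s := by
    rw [Real.sqrt_div (norm_nonneg _) 2, ← hs] at hη
    have := (lt_div_iff₀ hsqrt2').mp hη
    linarith [this]
  have hdenom : 0 < s - Real.sqrt 2 * η := by linarith
  have hK : 0 ≤ 2 * Real.sqrt 2 * η * s + η ^ 2 * (Real.sqrt 2 + 1) :=
    add_nonneg (mul_nonneg (mul_nonneg (mul_nonneg two_pos.le hsqrt2'.le) hη0.le) hs0)
      (mul_nonneg (sq_nonneg η) (by linarith))
  have hfrac : 1 ≤ s / (s - Real.sqrt 2 * η) := by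
    rw [le_div_iff₀ hdenom]
    nlinarith
  calc ‖covMatrix p - covMatrix q‖ ≤ 2 * η * s + η ^ 2 := hmain
    _ ≤ (2 * Real.sqrt 2 * η * s + η ^ 2 * (Real.sqrt 2 + 1)) * 1 := by nlinarith
    _ ≤ _ := mul_le_mul_of_nonneg_left hfrac hK
end

section
/- Let p and p̃ be probability distributions on ℝ^d with covariance matrices Σ and Σ̃, where Σ is invertible. There exists an explicit threshold f(‖Σ‖, ‖Σ^{-1}‖) > 0 such that for any 0 < η < min(√(‖Σ‖/2), f(‖Σ‖, ‖Σ^{-1}‖)): if W₂(p, p̃) ≤ η then ‖Σ̃^{-1} − Σ^{-1}‖ ≤ γ‖Σ^{-1}‖²/(1 − γ‖Σ^{-1}‖), where γ = (2√(2‖Σ‖)·η + η²(1+√2)) · ‖Σ‖/(‖Σ‖ − η√(2‖Σ‖)) satisfies γ‖Σ^{-1}‖ < 1. Concretely f(‖Σ‖,‖Σ^{-1}‖) = (−√2(2√‖Σ‖ + 1/(√‖Σ‖‖Σ^{-1}‖)) + √Δ)/(2(1+√2)) with Δ = 2(2√‖Σ‖ + 1/(√‖Σ‖‖Σ^{-1}‖))²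 + 4(√2+1)/‖Σ^{-1}‖. -/
open MeasureTheory
open scoped Matrix.Norms.L2Operator

/-- The explicit threshold `f(‖Σ‖, ‖Σ⁻¹‖)` of Proposition 1. -/
noncomputable def etaThreshold (a b : ℝ) : ℝ :=
  (-(Real.sqrt 2 * (2 * Real.sqrt a + 1 / (Real.sqrt a * b))) +
      Real.sqrt (2 * (2 * Real.sqrt a + 1 / (Real.sqrt a * b)) ^ 2 + 4 * (Real.sqrt 2 + 1) / b)) /
    (2 * (1 + Real.sqrt 2))

section helpers
variable {d : ℕ}

lemma coord_continuous (i : Fin d) : Continuous (fun x : EuclideanSpace ℝ (Fin d) => x i) :=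
  (EuclideanSpace.proj (𝕜 := ℝ) i).continuous

lemma centSum_continuous (u : EuclideanSpace ℝ (Fin d)) (c : Fin d → ℝ) :
    Continuous (fun x : EuclideanSpace ℝ (Fin d) => ∑ i, u i * (x i - c i)) := by
  refine continuous_finset_sum _ fun i _ => ?_
  exact continuous_const.mul ((coord_continuous i).sub continuous_const)

variable {Ω : Type*} [MeasurableSpace Ω] {π : Measure Ω}

lemma memLp_centSum [IsFiniteMeasure π] (X : Ω → EuclideanSpace ℝ (Fin d))
    (hX : MemLp X 2 π) (u : EuclideanSpace ℝ (Fin d)) (c : Fin d → ℝ) :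
    MemLp (fun ω => ∑ i, u i * (X ω i - c i)) 2 π := by
  have hXi : ∀ i : Fin d, MemLp (fun ω => X ω i) 2 π := fun i => by
    have := (EuclideanSpace.proj (𝕜 := ℝ) i).comp_memLp' hX
    exact this
  exact memLp_finset_sum Finset.univ
    (fun i _ => (((hXi i).sub (memLp_const _)).const_mul _))
end helpers

section helpers2
variable {α : Type*} [MeasurableSpace α] {μ : Measure α} {f g : α → ℝ}

lemma l2_mul_integrable (hf : MemLp f 2 μ) (hg : MemLp g 2 μ) :
    Integrable (fun x => f x * g x) μ := by
  have h := MeasureTheory.L2.integrable_inner (𝕜 := ℝ) (hf.toLp f) (hg.toLp g)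
  refine h.congr ?_
  filter_upwards [hf.coeFn_toLp, hg.coeFn_toLp] with x h1 h2
  simp [h1, h2, RCLike.inner_apply, conj_trivial]
  ring

lemma l2_CS (hf : MemLp f 2 μ) (hg : MemLp g 2 μ) :
    |∫ x, f x * g x ∂μ| ≤ Real.sqrt (∫ x, f x ^ 2 ∂μ) * Real.sqrt (∫ x, g x ^ 2 ∂μ) := by
  set F := hf.toLp f with hF
  set G := hg.toLp g with hG
  have h1 : (inner ℝ F G : ℝ) = ∫ x, f x * g x ∂μ := by
    rw [MeasureTheory.L2.inner_def]
    refine integral_congr_ae ?_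
    filter_upwards [hf.coeFn_toLp, hg.coeFn_toLp] with x hx1 hx2
    simp [hx1, hx2, RCLike.inner_apply, conj_trivial]
    rw [hF, hG, hx1, hx2]; ring
  have h2 : (inner ℝ F F : ℝ) = ∫ x, f x ^ 2 ∂μ := by
    rw [MeasureTheory.L2.inner_def]
    refine integral_congr_ae ?_
    filter_upwards [hf.coeFn_toLp] with x hx1
    simp [hx1, RCLike.inner_apply, conj_trivial, sq]
    rw [hF, hx1]
  have h3 : (inner ℝ G G : ℝ) = ∫ x, g x ^ 2 ∂μ := by
    rw [MeasureTheory.L2.inner_def]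
    refine integral_congr_ae ?_
    filter_upwards [hg.coeFn_toLp] with x hx1
    simp [hx1, RCLike.inner_apply, conj_trivial, sq]
    rw [hG, hx1]
  have hFn : Real.sqrt (∫ x, f x ^ 2 ∂μ) = ‖F‖ := by
    rw [← h2, real_inner_self_eq_norm_sq, Real.sqrt_sq (norm_nonneg _)]
  have hGn : Real.sqrt (∫ x, g x ^ 2 ∂μ) = ‖G‖ := by
    rw [← h3, real_inner_self_eq_norm_sq, Real.sqrt_sq (norm_nonneg _)]
  rw [← h1, hFn, hGn]
  exact abs_real_inner_le_norm F G
end helpers2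

section quad
variable {d : ℕ} {m : Measure (EuclideanSpace ℝ (Fin d))}

lemma quad_eq [IsProbabilityMeasure m] (hm : MemLp id 2 m)
    (u v : EuclideanSpace ℝ (Fin d)) :
    ∫ x, (∑ j, v j * (x j - measureMean m j)) * (∑ i, u i * (x i - measureMean m i)) ∂m
      = ∑ j, ∑ i, v j * u i * covMatrix m j i := by
  have hcm : ∀ i : Fin d, MemLp (fun x : EuclideanSpace ℝ (Fin d) => x i - measureMean m i) 2 m :=
    fun i => by
      have h0 : MemLp (fun x : EuclideanSpace ℝ (Fin d) => x i) 2 m := by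
        have := (EuclideanSpace.proj (𝕜 := ℝ) i).comp_memLp' hm
        simpa [Function.comp] using this
      exact h0.sub (memLp_const _)
  have hint : ∀ i j : Fin d, Integrable
      (fun x : EuclideanSpace ℝ (Fin d) =>
        (x i - measureMean m i) * (x j - measureMean m j)) m :=
    fun i j => l2_mul_integrable (hcm i) (hcm j)
  have hexp : ∀ x : EuclideanSpace ℝ (Fin d),
      (∑ j, v j * (x j - measureMean m j)) * (∑ i, u i * (x i - measureMean m i))
        = ∑ j, ∑ i, (v j * u i) * ((x j - measureMean m j) * (x i - measureMean m i)) := by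
    intro x
    rw [Finset.sum_mul_sum]
    refine Finset.sum_congr rfl fun j _ => Finset.sum_congr rfl fun i _ => by ring
  rw [integral_congr_ae (Filter.Eventually.of_forall hexp)]
  rw [integral_finset_sum _ (fun j _ => ?_)]
  · refine Finset.sum_congr rfl fun j _ => ?_
    rw [integral_finset_sum _ (fun i _ => ((hint j i).const_mul _))]
    refine Finset.sum_congr rfl fun i _ => ?_
    rw [integral_const_mul]
    rfl
  · exact integrable_finset_sum _ fun i _ => (hint j i).const_mul _
end quad

section bridge
variable {d : ℕ}

lemma bilin_eq_inner (A : Matrix (Fin d) (Fin d) ℝ) (u v : EuclideanSpace ℝ (Fin d)) :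
    ∑ j, ∑ i, v j * u i * A j i
      = (inner ℝ ((WithLp.equiv 2 _).symm (A.mulVec (WithLp.equiv 2 _ u))) v : ℝ) := by
  simp only [PiLp.inner_apply, RCLike.inner_apply, conj_trivial, WithLp.equiv_symm_apply,
    Matrix.mulVec, dotProduct, WithLp.equiv_apply]
  refine Finset.sum_congr rfl fun j _ => ?_
  rw [Finset.mul_sum]
  refine Finset.sum_congr rfl fun i _ => by ring

lemma bilin_le (A : Matrix (Fin d) (Fin d) ℝ) (u v : EuclideanSpace ℝ (Fin d)) :
    |∑ j, ∑ i, v j * u i * A j i| ≤ ‖A‖ * ‖u‖ * ‖v‖ := by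
  rw [bilin_eq_inner]
  calc |(inner ℝ ((WithLp.equiv 2 _).symm (A.mulVec (WithLp.equiv 2 _ u))) v : ℝ)|
      ≤ ‖(WithLp.equiv 2 _).symm (A.mulVec (WithLp.equiv 2 _ u))‖ * ‖v‖ :=
        abs_real_inner_le_norm _ _
    _ ≤ (‖A‖ * ‖u‖) * ‖v‖ := by
        gcongr
        exact A.l2_opNorm_mulVec _
    _ = ‖A‖ * ‖u‖ * ‖v‖ := by ring

lemma norm_le_of_bilin (A : Matrix (Fin d) (Fin d) ℝ) (C : ℝ) (hC : 0 ≤ C)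
    (h : ∀ u v : EuclideanSpace ℝ (Fin d), |∑ j, ∑ i, v j * u i * A j i| ≤ C * ‖u‖ * ‖v‖) :
    ‖A‖ ≤ C := by
  rw [Matrix.cstar_norm_def]
  refine ContinuousLinearMap.opNorm_le_bound _ hC fun u => ?_
  set w : EuclideanSpace ℝ (Fin d) := Matrix.toEuclideanCLM (𝕜 := ℝ) A u with hw
  have hw2 : (WithLp.equiv 2 _).symm (A.mulVec ((WithLp.equiv 2 _) u)) = w := by
    rw [hw, Equiv.symm_apply_eq, WithLp.equiv_apply, WithLp.equiv_apply, Matrix.ofLp_toEuclideanCLM]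
  have h2 : ‖w‖ ^ 2 ≤ C * ‖u‖ * ‖w‖ := by
    have h3 := h u w
    rw [bilin_eq_inner, hw2] at h3
    rw [← real_inner_self_eq_norm_sq]
    exact le_trans (le_abs_self _) h3
  rcases eq_or_lt_of_le (norm_nonneg w) with h0 | h0
  · rw [← h0]; positivity
  · nlinarith
end bridge

lemma cov_diff {d : ℕ} (p q : Measure (EuclideanSpace ℝ (Fin d)))
    [IsProbabilityMeasure p] [IsProbabilityMeasure q]
    (hp : MemLp id 2 p) (hq : MemLp id 2 q)
    (π : Measure (EuclideanSpace ℝ (Fin d) × EuclideanSpace ℝ (Fin d)))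
    (hfst : π.map Prod.fst = p) (hsnd : π.map Prod.snd = q)
    (r : ℝ) (hr : 0 ≤ r) (hcost : (∫ z, ‖z.1 - z.2‖ ^ 2 ∂π) = r ^ 2) :
    ‖covMatrix q - covMatrix p‖ ≤ 2 * Real.sqrt ‖covMatrix p‖ * r + r ^ 2 := by
  have hπ : IsProbabilityMeasure π := by
    constructor
    have h1 : (π.map Prod.fst) Set.univ = 1 := by rw [hfst]; exact measure_univ
    rwa [Measure.map_apply measurable_fst MeasurableSet.univ, Set.preimage_univ] at h1
  have hX : MemLp (fun z : EuclideanSpace ℝ (Fin d) × EuclideanSpace ℝ (Fin d) => z.1) 2 π := by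
    have hid : MemLp id 2 (π.map Prod.fst) := hfst ▸ hp
    have := (memLp_map_measure_iff hid.aestronglyMeasurable measurable_fst.aemeasurable).mp hid
    simpa [Function.comp] using this
  have hY : MemLp (fun z : EuclideanSpace ℝ (Fin d) × EuclideanSpace ℝ (Fin d) => z.2) 2 π := by
    have hid : MemLp id 2 (π.map Prod.snd) := hsnd ▸ hq
    have := (memLp_map_measure_iff hid.aestronglyMeasurable measurable_snd.aemeasurable).mp hid
    simpa [Function.comp] using this
  have hXi : ∀ i : Fin d, MemLp (fun z : EuclideanSpace ℝ (Fin d) × EuclideanSpace ℝ (Fin d)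
      => z.1 i) 2 π := fun i => by
    have := (EuclideanSpace.proj (𝕜 := ℝ) i).comp_memLp' hX
    exact this
  have hYi : ∀ i : Fin d, MemLp (fun z : EuclideanSpace ℝ (Fin d) × EuclideanSpace ℝ (Fin d)
      => z.2 i) 2 π := fun i => by
    have := (EuclideanSpace.proj (𝕜 := ℝ) i).comp_memLp' hY
    exact this
  have hXint : ∀ i, Integrable (fun z : EuclideanSpace ℝ (Fin d) × EuclideanSpace ℝ (Fin d)
      => z.1 i) π := fun i => (hXi i).integrable one_le_two
  have hYint : ∀ i, Integrable (fun z : EuclideanSpace ℝ (Fin d) × EuclideanSpace ℝ (Fin d)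
      => z.2 i) π := fun i => (hYi i).integrable one_le_two
  have hIp : ∀ F : EuclideanSpace ℝ (Fin d) → ℝ, AEStronglyMeasurable F p →
      ∫ x, F x ∂p = ∫ z, F z.1 ∂π := by
    intro F hF
    rw [← hfst] at hF ⊢
    exact integral_map measurable_fst.aemeasurable hF
  have hIq : ∀ F : EuclideanSpace ℝ (Fin d) → ℝ, AEStronglyMeasurable F q →
      ∫ x, F x ∂q = ∫ z, F z.2 ∂π := by
    intro F hF
    rw [← hsnd] at hF ⊢
    exact integral_map measurable_snd.aemeasurable hF
  -- MemLp of the three scalar families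
  have hfM : ∀ u : EuclideanSpace ℝ (Fin d),
      MemLp (fun z : EuclideanSpace ℝ (Fin d) × EuclideanSpace ℝ (Fin d)
        => ∑ i, u i * (z.1 i - measureMean p i)) 2 π := fun u => memLp_centSum _ hX u _
  have hgM : ∀ u : EuclideanSpace ℝ (Fin d),
      MemLp (fun z : EuclideanSpace ℝ (Fin d) × EuclideanSpace ℝ (Fin d)
        => ∑ i, u i * (z.2 i - measureMean q i)) 2 π := fun u => memLp_centSum _ hY u _
  have hhM : ∀ u : EuclideanSpace ℝ (Fin d),
      MemLp (fun z : EuclideanSpace ℝ (Fin d) × EuclideanSpace ℝ (Fin d)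
        => (∑ i, u i * (z.2 i - measureMean q i)) - (∑ i, u i * (z.1 i - measureMean p i)))
        2 π := fun u => (hgM u).sub (hfM u)
  -- quadratic forms through the coupling
  have hquadp : ∀ u v : EuclideanSpace ℝ (Fin d),
      ∫ z, (∑ j, v j * (z.1 j - measureMean p j)) * (∑ i, u i * (z.1 i - measureMean p i)) ∂π
        = ∑ j, ∑ i, v j * u i * covMatrix p j i := by
    intro u v
    rw [← hIp (fun x => (∑ j, v j * (x j - measureMean p j)) * (∑ i, u i * (x i - measureMean p i)))
      ((centSum_continuous v _).mul (centSum_continuous u _)).aestronglyMeasurable]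
    exact quad_eq hp u v
  have hquadq : ∀ u v : EuclideanSpace ℝ (Fin d),
      ∫ z, (∑ j, v j * (z.2 j - measureMean q j)) * (∑ i, u i * (z.2 i - measureMean q i)) ∂π
        = ∑ j, ∑ i, v j * u i * covMatrix q j i := by
    intro u v
    rw [← hIq (fun x => (∑ j, v j * (x j - measureMean q j)) * (∑ i, u i * (x i - measureMean q i)))
      ((centSum_continuous v _).mul (centSum_continuous u _)).aestronglyMeasurable]
    exact quad_eq hq u v
  -- second moment bound for f
  have hfsq : ∀ u : EuclideanSpace ℝ (Fin d),
      ∫ z, (∑ i, u i * (z.1 i - measureMean p i)) ^ 2 ∂π ≤ ‖covMatrix p‖ * ‖u‖ ^ 2 := by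
    intro u
    have h1 : ∫ z, (∑ i, u i * (z.1 i - measureMean p i)) ^ 2 ∂π
        = ∑ j, ∑ i, u j * u i * covMatrix p j i := by
      rw [← hquadp u u]
      refine integral_congr_ae (Filter.Eventually.of_forall fun z => ?_)
      simp only [sq]
    rw [h1]
    calc ∑ j, ∑ i, u j * u i * covMatrix p j i ≤ |∑ j, ∑ i, u j * u i * covMatrix p j i| :=
          le_abs_self _
    _ ≤ ‖covMatrix p‖ * ‖u‖ * ‖u‖ := bilin_le _ u u
    _ = ‖covMatrix p‖ * ‖u‖ ^ 2 := by ring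
  -- means
  have hmean1 : ∀ i, (∫ z : EuclideanSpace ℝ (Fin d) × EuclideanSpace ℝ (Fin d), z.1 i ∂π)
      = measureMean p i := fun i =>
    (hIp _ (coord_continuous i).aestronglyMeasurable).symm
  have hmean2 : ∀ i, (∫ z : EuclideanSpace ℝ (Fin d) × EuclideanSpace ℝ (Fin d), z.2 i ∂π)
      = measureMean q i := fun i =>
    (hIq _ (coord_continuous i).aestronglyMeasurable).symm
  -- the W function
  have hWM : ∀ u : EuclideanSpace ℝ (Fin d),
      MemLp (fun z : EuclideanSpace ℝ (Fin d) × EuclideanSpace ℝ (Fin d)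
        => ∑ i, u i * (z.2 i - z.1 i)) 2 π := fun u =>
    memLp_finset_sum Finset.univ (fun i _ => (((hYi i).sub (hXi i)).const_mul _))
  have hmeanW : ∀ u : EuclideanSpace ℝ (Fin d),
      ∫ z, (∑ i, u i * (z.2 i - z.1 i)) ∂π
        = ∑ i, u i * (measureMean q i - measureMean p i) := by
    intro u
    rw [integral_finset_sum (μ := π) Finset.univ
      (f := fun (i : Fin d) (z : EuclideanSpace ℝ (Fin d) × EuclideanSpace ℝ (Fin d))
        => u i * (z.2 i - z.1 i))
      (fun i _ => (((hYint i).sub (hXint i)).const_mul _))]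
    refine Finset.sum_congr rfl fun i _ => ?_
    rw [integral_const_mul, integral_sub (hYint i) (hXint i), hmean1, hmean2]
  have hcostint : Integrable (fun z : EuclideanSpace ℝ (Fin d) × EuclideanSpace ℝ (Fin d)
      => ‖z.1 - z.2‖ ^ 2) π := by
    have hXY := hX.sub hY
    exact (memLp_two_iff_integrable_sq_norm hXY.aestronglyMeasurable).mp hXY
  have hWsq : ∀ u : EuclideanSpace ℝ (Fin d),
      ∫ z, (∑ i, u i * (z.2 i - z.1 i)) ^ 2 ∂π ≤ ‖u‖ ^ 2 * r ^ 2 := by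
    intro u
    have hpt : ∀ z : EuclideanSpace ℝ (Fin d) × EuclideanSpace ℝ (Fin d),
        (∑ i, u i * (z.2 i - z.1 i)) ^ 2 ≤ ‖u‖ ^ 2 * ‖z.1 - z.2‖ ^ 2 := by
      intro z
      have h1 : (∑ i, u i * (z.2 i - z.1 i)) = (inner ℝ u (z.2 - z.1) : ℝ) := by
        simp [PiLp.inner_apply, RCLike.inner_apply, conj_trivial, PiLp.sub_apply]
        exact Finset.sum_congr rfl fun i _ => mul_comm _ _
      rw [h1]
      calc (inner ℝ u (z.2 - z.1) : ℝ) ^ 2 = |(inner ℝ u (z.2 - z.1) : ℝ)| ^ 2 := (sq_abs _).symm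
      _ ≤ (‖u‖ * ‖z.2 - z.1‖) ^ 2 := by
          have := abs_real_inner_le_norm u (z.2 - z.1)
          exact pow_le_pow_left₀ (abs_nonneg _) this 2
      _ = ‖u‖ ^ 2 * ‖z.1 - z.2‖ ^ 2 := by rw [norm_sub_rev]; ring
    calc ∫ z, (∑ i, u i * (z.2 i - z.1 i)) ^ 2 ∂π
        ≤ ∫ z, ‖u‖ ^ 2 * ‖z.1 - z.2‖ ^ 2 ∂π :=
          integral_mono ((hWM u).integrable_sq) (hcostint.const_mul _) hpt
    _ = ‖u‖ ^ 2 * r ^ 2 := by rw [integral_const_mul, hcost]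
  -- second moment bound for h
  have hhsq : ∀ u : EuclideanSpace ℝ (Fin d),
      ∫ z, ((∑ i, u i * (z.2 i - measureMean q i)) - (∑ i, u i * (z.1 i - measureMean p i))) ^ 2 ∂π
        ≤ ‖u‖ ^ 2 * r ^ 2 := by
    intro u
    set c : ℝ := ∑ i, u i * (measureMean q i - measureMean p i) with hc
    have hpt : ∀ z : EuclideanSpace ℝ (Fin d) × EuclideanSpace ℝ (Fin d),
        ((∑ i, u i * (z.2 i - measureMean q i)) - (∑ i, u i * (z.1 i - measureMean p i)))
          = (∑ i, u i * (z.2 i - z.1 i)) - c := by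
      intro z
      rw [hc, ← Finset.sum_sub_distrib, ← Finset.sum_sub_distrib]
      refine Finset.sum_congr rfl fun i _ => by ring
    have hWint : Integrable (fun z : EuclideanSpace ℝ (Fin d) × EuclideanSpace ℝ (Fin d)
        => ∑ i, u i * (z.2 i - z.1 i)) π := (hWM u).integrable one_le_two
    have hW2int : Integrable (fun z : EuclideanSpace ℝ (Fin d) × EuclideanSpace ℝ (Fin d)
        => (∑ i, u i * (z.2 i - z.1 i)) ^ 2) π := (hWM u).integrable_sq
    have hexp : ∫ z, ((∑ i, u i * (z.2 i - measureMean q i))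
          - (∑ i, u i * (z.1 i - measureMean p i))) ^ 2 ∂π
        = (∫ z, (∑ i, u i * (z.2 i - z.1 i)) ^ 2 ∂π) - c ^ 2 := by
      have h0 : (fun z : EuclideanSpace ℝ (Fin d) × EuclideanSpace ℝ (Fin d)
          => ((∑ i, u i * (z.2 i - measureMean q i))
            - (∑ i, u i * (z.1 i - measureMean p i))) ^ 2)
          = fun z => (∑ i, u i * (z.2 i - z.1 i)) ^ 2
              - (2 * c) * (∑ i, u i * (z.2 i - z.1 i)) + c ^ 2 := by
        funext z
        rw [hpt z]
        ring
      have i6 : Integrable (fun z : EuclideanSpace ℝ (Fin d) × EuclideanSpace ℝ (Fin d)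
          => (∑ i, u i * (z.2 i - z.1 i)) ^ 2
            - (2 * c) * (∑ i, u i * (z.2 i - z.1 i))) π := by
        exact hW2int.sub (hWint.const_mul _)
      rw [h0, integral_add i6 (integrable_const _),
        integral_sub hW2int (hWint.const_mul _), integral_const_mul, hmeanW,
        integral_const]
      simp [measure_univ]
      ring
    rw [hexp]
    have := hWsq u
    nlinarith [sq_nonneg c]
  -- bilinear identity for the difference
  have hbil : ∀ u v : EuclideanSpace ℝ (Fin d),
      ∑ j, ∑ i, v j * u i * (covMatrix q - covMatrix p) j i
        = (∫ z, (∑ j, v j * (z.1 j - measureMean p j))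
              * ((∑ i, u i * (z.2 i - measureMean q i))
                - (∑ i, u i * (z.1 i - measureMean p i))) ∂π)
          + (∫ z, ((∑ j, v j * (z.2 j - measureMean q j))
              - (∑ j, v j * (z.1 j - measureMean p j)))
              * (∑ i, u i * (z.1 i - measureMean p i)) ∂π)
          + (∫ z, ((∑ j, v j * (z.2 j - measureMean q j))
              - (∑ j, v j * (z.1 j - measureMean p j)))
              * ((∑ i, u i * (z.2 i - measureMean q i))
                - (∑ i, u i * (z.1 i - measureMean p i))) ∂π) := by
    intro u v
    have hLHS : ∑ j, ∑ i, v j * u i * (covMatrix q - covMatrix p) j i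
        = (∫ z, (∑ j, v j * (z.2 j - measureMean q j))
              * (∑ i, u i * (z.2 i - measureMean q i)) ∂π)
          - (∫ z, (∑ j, v j * (z.1 j - measureMean p j))
              * (∑ i, u i * (z.1 i - measureMean p i)) ∂π) := by
      rw [hquadp u v, hquadq u v, ← Finset.sum_sub_distrib]
      refine Finset.sum_congr rfl fun j _ => ?_
      rw [← Finset.sum_sub_distrib]
      refine Finset.sum_congr rfl fun i _ => ?_
      rw [Matrix.sub_apply]
      ring
    rw [hLHS]
    have i1 : Integrable (fun z : EuclideanSpace ℝ (Fin d) × EuclideanSpace ℝ (Fin d)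
        => (∑ j, v j * (z.1 j - measureMean p j))
          * ((∑ i, u i * (z.2 i - measureMean q i))
            - (∑ i, u i * (z.1 i - measureMean p i)))) π :=
      l2_mul_integrable (hfM v) (hhM u)
    have i2 : Integrable (fun z : EuclideanSpace ℝ (Fin d) × EuclideanSpace ℝ (Fin d)
        => ((∑ j, v j * (z.2 j - measureMean q j)) - (∑ j, v j * (z.1 j - measureMean p j)))
          * (∑ i, u i * (z.1 i - measureMean p i))) π :=
      l2_mul_integrable (hhM v) (hfM u)
    have i3 : Integrable (fun z : EuclideanSpace ℝ (Fin d) × EuclideanSpace ℝ (Fin d)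
        => ((∑ j, v j * (z.2 j - measureMean q j)) - (∑ j, v j * (z.1 j - measureMean p j)))
          * ((∑ i, u i * (z.2 i - measureMean q i))
            - (∑ i, u i * (z.1 i - measureMean p i)))) π :=
      l2_mul_integrable (hhM v) (hhM u)
    have i4 : Integrable (fun z : EuclideanSpace ℝ (Fin d) × EuclideanSpace ℝ (Fin d)
        => (∑ j, v j * (z.2 j - measureMean q j))
          * (∑ i, u i * (z.2 i - measureMean q i))) π :=
      l2_mul_integrable (hgM v) (hgM u)
    have i5 : Integrable (fun z : EuclideanSpace ℝ (Fin d) × EuclideanSpace ℝ (Fin d)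
        => (∑ j, v j * (z.1 j - measureMean p j))
          * (∑ i, u i * (z.1 i - measureMean p i))) π :=
      l2_mul_integrable (hfM v) (hfM u)
    have i12 : Integrable (fun z : EuclideanSpace ℝ (Fin d) × EuclideanSpace ℝ (Fin d)
        => (∑ j, v j * (z.1 j - measureMean p j))
          * ((∑ i, u i * (z.2 i - measureMean q i))
            - (∑ i, u i * (z.1 i - measureMean p i)))
          + ((∑ j, v j * (z.2 j - measureMean q j)) - (∑ j, v j * (z.1 j - measureMean p j)))
            * (∑ i, u i * (z.1 i - measureMean p i))) π := by exact i1.add i2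
    rw [← integral_add i1 i2, ← integral_add i12 i3, ← integral_sub i4 i5]
    refine integral_congr_ae (Filter.Eventually.of_forall fun z => ?_)
    ring
  -- final bound
  have hC : (0:ℝ) ≤ 2 * Real.sqrt ‖covMatrix p‖ * r + r ^ 2 := by positivity
  refine norm_le_of_bilin _ _ hC fun u v => ?_
  have s1 : ∀ w : EuclideanSpace ℝ (Fin d),
      Real.sqrt (∫ z, (∑ i, w i * (z.1 i - measureMean p i)) ^ 2 ∂π)
        ≤ Real.sqrt ‖covMatrix p‖ * ‖w‖ := by
    intro w
    have := Real.sqrt_le_sqrt (hfsq w)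
    rwa [Real.sqrt_mul (norm_nonneg _), Real.sqrt_sq (norm_nonneg w)] at this
  have s2 : ∀ w : EuclideanSpace ℝ (Fin d),
      Real.sqrt (∫ z, ((∑ i, w i * (z.2 i - measureMean q i))
          - (∑ i, w i * (z.1 i - measureMean p i))) ^ 2 ∂π) ≤ ‖w‖ * r := by
    intro w
    have := Real.sqrt_le_sqrt (hhsq w)
    rwa [Real.sqrt_mul (sq_nonneg _), Real.sqrt_sq (norm_nonneg w),
      Real.sqrt_sq hr] at this
  have b1 := l2_CS (hfM v) (hhM u)
  have b2 := l2_CS (hhM v) (hfM u)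
  have b3 := l2_CS (hhM v) (hhM u)
  have e1 : |∫ z, (∑ j, v j * (z.1 j - measureMean p j))
      * ((∑ i, u i * (z.2 i - measureMean q i))
        - (∑ i, u i * (z.1 i - measureMean p i))) ∂π|
      ≤ (Real.sqrt ‖covMatrix p‖ * ‖v‖) * (‖u‖ * r) := by
    exact le_trans b1 (mul_le_mul (s1 v) (s2 u) (Real.sqrt_nonneg _) (by positivity))
  have e2 : |∫ z, ((∑ j, v j * (z.2 j - measureMean q j))
      - (∑ j, v j * (z.1 j - measureMean p j)))
      * (∑ i, u i * (z.1 i - measureMean p i)) ∂π|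
      ≤ (‖v‖ * r) * (Real.sqrt ‖covMatrix p‖ * ‖u‖) := by
    exact le_trans b2 (mul_le_mul (s2 v) (s1 u) (Real.sqrt_nonneg _) (by positivity))
  have e3 : |∫ z, ((∑ j, v j * (z.2 j - measureMean q j))
      - (∑ j, v j * (z.1 j - measureMean p j)))
      * ((∑ i, u i * (z.2 i - measureMean q i))
        - (∑ i, u i * (z.1 i - measureMean p i))) ∂π|
      ≤ (‖v‖ * r) * (‖u‖ * r) := by
    exact le_trans b3 (mul_le_mul (s2 v) (s2 u) (Real.sqrt_nonneg _) (by positivity))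
  rw [hbil u v]
  calc |_ + _ + _| ≤ _ := abs_add_three _ _ _
  _ ≤ (Real.sqrt ‖covMatrix p‖ * ‖v‖) * (‖u‖ * r) + (‖v‖ * r) * (Real.sqrt ‖covMatrix p‖ * ‖u‖)
      + (‖v‖ * r) * (‖u‖ * r) := by
    exact add_le_add (add_le_add e1 e2) e3
  _ = (2 * Real.sqrt ‖covMatrix p‖ * r + r ^ 2) * ‖u‖ * ‖v‖ := by ring


lemma norm_one_matrix_le {d : ℕ} : ‖(1 : Matrix (Fin d) (Fin d) ℝ)‖ ≤ 1 := by
  rw [Matrix.cstar_norm_def, map_one, ContinuousLinearMap.one_def]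
  exact ContinuousLinearMap.norm_id_le

lemma inv_perturb {d : ℕ} (A B : Matrix (Fin d) (Fin d) ℝ) (hA : IsUnit A) (γ : ℝ)
    (hE : ‖B - A‖ ≤ γ) (h1 : γ * ‖A⁻¹‖ < 1) :
    ‖B⁻¹ - A⁻¹‖ ≤ γ * ‖A⁻¹‖ ^ 2 / (1 - γ * ‖A⁻¹‖) := by
  have hAd : IsUnit A.det := (Matrix.isUnit_iff_isUnit_det A).mp hA
  set b := ‖A⁻¹‖ with hb
  have hb0 : 0 ≤ b := norm_nonneg _
  have hγ0 : 0 ≤ γ := le_trans (norm_nonneg _) hE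
  have hden : 0 < 1 - γ * b := by linarith
  have htle : ‖-(A⁻¹ * (B - A))‖ ≤ γ * b := by
    rw [norm_neg]
    calc ‖A⁻¹ * (B - A)‖ ≤ ‖A⁻¹‖ * ‖B - A‖ := norm_mul_le _ _
    _ ≤ γ * b := by rw [← hb]; nlinarith [norm_nonneg (A⁻¹)]
  have ht : ‖-(A⁻¹ * (B - A))‖ < 1 := lt_of_le_of_lt htle h1
  set u : (Matrix (Fin d) (Fin d) ℝ)ˣ := Units.oneSub _ ht with hu
  have huval : (u : Matrix (Fin d) (Fin d) ℝ) = A⁻¹ * B := by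
    rw [hu, Units.val_oneSub, sub_neg_eq_add, Matrix.mul_sub, Matrix.nonsing_inv_mul A hAd]
    abel
  have hBA : B = A * (A⁻¹ * B) := by
    rw [← Matrix.mul_assoc, Matrix.mul_nonsing_inv A hAd, Matrix.one_mul]
  have hBunit : IsUnit B := by
    rw [hBA, ← huval]; exact hA.mul u.isUnit
  have hBd : IsUnit B.det := (Matrix.isUnit_iff_isUnit_det B).mp hBunit
  set v : Matrix (Fin d) (Fin d) ℝ := (A⁻¹ * B)⁻¹ with hv
  have hvu : v = (↑u⁻¹ : Matrix (Fin d) (Fin d) ℝ) := by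
    rw [hv, ← huval, Matrix.nonsing_inv_eq_ringInverse, Ring.inverse_unit]
  have hveq : v = 1 + v * (-(A⁻¹ * (B - A))) := by
    have h2 : v - v * (-(A⁻¹ * (B - A))) = 1 := by
      have h3 : v * (1 - -(A⁻¹ * (B - A))) = 1 := by
        rw [hvu]
        have h4 : (1 : Matrix (Fin d) (Fin d) ℝ) - -(A⁻¹ * (B - A)) = (u : _) := by
          rw [hu, Units.val_oneSub]
        rw [h4]; exact u.inv_mul
      rw [Matrix.mul_sub, Matrix.mul_one] at h3
      exact h3
    exact eq_add_of_sub_eq h2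
  have hvnorm : ‖v‖ ≤ 1 / (1 - γ * b) := by
    have h3 : ‖v‖ ≤ 1 + ‖v‖ * (γ * b) := by
      calc ‖v‖ = ‖1 + v * (-(A⁻¹ * (B - A)))‖ := by rw [← hveq]
      _ ≤ ‖(1 : Matrix (Fin d) (Fin d) ℝ)‖ + ‖v * (-(A⁻¹ * (B - A)))‖ := norm_add_le _ _
      _ ≤ 1 + ‖v‖ * ‖-(A⁻¹ * (B - A))‖ := by
          gcongr
          · exact norm_one_matrix_le
          · exact norm_mul_le _ _
      _ ≤ 1 + ‖v‖ * (γ * b) := by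
          gcongr 1 + ?_
          exact mul_le_mul_of_nonneg_left htle (norm_nonneg _)
    rw [le_div_iff₀ hden]
    nlinarith
  have hBinv : B⁻¹ = v * A⁻¹ := by
    conv_lhs => rw [hBA]
    rw [Matrix.mul_inv_rev]
  have hBnormle : ‖B⁻¹‖ ≤ b / (1 - γ * b) := by
    rw [hBinv]
    calc ‖v * A⁻¹‖ ≤ ‖v‖ * b := norm_mul_le _ _
    _ ≤ (1 / (1 - γ * b)) * b := mul_le_mul_of_nonneg_right hvnorm hb0
    _ = b / (1 - γ * b) := by ring
  have hkey : B⁻¹ - A⁻¹ = B⁻¹ * (A - B) * A⁻¹ := by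
    simp only [Matrix.mul_sub, Matrix.sub_mul, Matrix.mul_assoc,
      Matrix.mul_nonsing_inv A hAd, Matrix.nonsing_inv_mul B hBd,
      Matrix.mul_one, Matrix.one_mul]
  calc ‖B⁻¹ - A⁻¹‖ = ‖B⁻¹ * (A - B) * A⁻¹‖ := by rw [hkey]
  _ ≤ ‖B⁻¹ * (A - B)‖ * b := norm_mul_le _ _
  _ ≤ (‖B⁻¹‖ * ‖A - B‖) * b := mul_le_mul_of_nonneg_right (norm_mul_le _ _) hb0
  _ ≤ ((b / (1 - γ * b)) * γ) * b := by
      have hAB : ‖A - B‖ ≤ γ := by rw [← norm_neg]; simpa using hE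
      have h5 : ‖B⁻¹‖ * ‖A - B‖ ≤ (b / (1 - γ * b)) * γ :=
        mul_le_mul hBnormle hAB (norm_nonneg _) (by positivity)
      exact mul_le_mul_of_nonneg_right h5 hb0
  _ = γ * b ^ 2 / (1 - γ * b) := by ring

lemma alg_part (a b η : ℝ) (ha : 0 < a) (hb : 0 < b) (hη0 : 0 < η)
    (h1 : η < Real.sqrt (a / 2)) (h2 : η < etaThreshold a b) :
    0 < a - η * Real.sqrt (2 * a) ∧
    2 * Real.sqrt a * η + η ^ 2 ≤
      (2 * Real.sqrt (2 * a) * η + η ^ 2 * (1 + Real.sqrt 2)) *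
        (a / (a - η * Real.sqrt (2 * a))) ∧
    (2 * Real.sqrt (2 * a) * η + η ^ 2 * (1 + Real.sqrt 2)) *
        (a / (a - η * Real.sqrt (2 * a))) * b < 1 := by
  set s := Real.sqrt a with hs
  have hs0 : 0 < s := Real.sqrt_pos.mpr ha
  have hs2 : s ^ 2 = a := Real.sq_sqrt ha.le
  have hr2 : Real.sqrt 2 ^ 2 = 2 := Real.sq_sqrt (by norm_num)
  have hr2pos : 0 < Real.sqrt 2 := Real.sqrt_pos.mpr (by norm_num)
  have hr2gt1 : 1 < Real.sqrt 2 := by nlinarith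
  have ht : Real.sqrt (2 * a) = Real.sqrt 2 * s := Real.sqrt_mul (by norm_num) a
  set t := Real.sqrt (2 * a) with htd
  have ht0 : 0 < t := by rw [ht]; positivity
  have hden : η * t < a := by
    have h6 : Real.sqrt (a / 2) * t = a := by
      rw [htd, ← Real.sqrt_mul (by positivity)]
      rw [show a / 2 * (2 * a) = a ^ 2 by ring, Real.sqrt_sq ha.le]
    calc η * t < Real.sqrt (a / 2) * t := mul_lt_mul_of_pos_right h1 ht0
    _ = a := h6
  refine ⟨by linarith, ?_, ?_⟩
  · have hratio : 1 ≤ a / (a - η * t) := by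
      rw [le_div_iff₀ (by linarith)]
      nlinarith
    have hnum : 2 * s * η + η ^ 2 ≤ 2 * t * η + η ^ 2 * (1 + Real.sqrt 2) := by
      rw [ht]
      nlinarith [mul_pos (mul_pos (sub_pos.mpr hr2gt1) hs0) hη0, sq_nonneg η]
    calc 2 * s * η + η ^ 2 = (2 * s * η + η ^ 2) * 1 := by ring
    _ ≤ (2 * t * η + η ^ 2 * (1 + Real.sqrt 2)) * (a / (a - η * t)) := by
        apply mul_le_mul hnum hratio (by norm_num) (by nlinarith)
  · set c := 2 * s + 1 / (s * b) with hc
    have hc0 : 0 < c := by positivity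
    have hΔ : 0 ≤ 2 * c ^ 2 + 4 * (Real.sqrt 2 + 1) / b := by positivity
    set D := Real.sqrt (2 * c ^ 2 + 4 * (Real.sqrt 2 + 1) / b) with hD
    have hD2 : D ^ 2 = 2 * c ^ 2 + 4 * (Real.sqrt 2 + 1) / b := Real.sq_sqrt hΔ
    have hη₀ : etaThreshold a b = (-(Real.sqrt 2 * c) + D) / (2 * (1 + Real.sqrt 2)) := rfl
    have h1r : (0:ℝ) < 1 + Real.sqrt 2 := by linarith
    clear_value s t c D
    have hProot : (1 + Real.sqrt 2) * (etaThreshold a b) ^ 2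
        + Real.sqrt 2 * c * (etaThreshold a b) - 1 / b = 0 := by
      rw [hη₀]
      have key : D ^ 2 - (Real.sqrt 2 * c) ^ 2 - 4 * (1 + Real.sqrt 2) * (1 / b) = 0 := by
        rw [hD2, mul_pow, hr2]
        field_simp
        ring
      have expand : (1 + Real.sqrt 2) * ((-(Real.sqrt 2 * c) + D) / (2 * (1 + Real.sqrt 2))) ^ 2
            + Real.sqrt 2 * c * ((-(Real.sqrt 2 * c) + D) / (2 * (1 + Real.sqrt 2))) - 1 / b
          = (D ^ 2 - (Real.sqrt 2 * c) ^ 2 - 4 * (1 + Real.sqrt 2) * (1 / b))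
              / (4 * (1 + Real.sqrt 2)) := by
        field_simp
        ring
      rw [expand, key, zero_div]
    have hP : (1 + Real.sqrt 2) * η ^ 2 + Real.sqrt 2 * c * η - 1 / b < 0 := by
      have hη₀pos : 0 < etaThreshold a b := lt_trans hη0 h2
      have hmono : (1 + Real.sqrt 2) * η ^ 2 + Real.sqrt 2 * c * η
          < (1 + Real.sqrt 2) * (etaThreshold a b) ^ 2
            + Real.sqrt 2 * c * (etaThreshold a b) := by
        nlinarith [mul_pos (sub_pos.mpr h2) (show 0 < etaThreshold a b + η by linarith),
          mul_pos (mul_pos hr2pos hc0) (sub_pos.mpr h2)]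
      linarith
    have hcab : Real.sqrt 2 * c * (a * b) = 2 * t * (a * b) + t := by
      rw [hc, ht, ← hs2]
      field_simp
    have hab1 : a * b * (1 / b) = a := by field_simp
    have key : (2 * t * η + η ^ 2 * (1 + Real.sqrt 2)) * a * b < a - η * t := by
      have hmul : a * b * ((1 + Real.sqrt 2) * η ^ 2 + Real.sqrt 2 * c * η - 1 / b) < 0 :=
        mul_neg_of_pos_of_neg (by positivity) hP
      have hexp : a * b * ((1 + Real.sqrt 2) * η ^ 2 + Real.sqrt 2 * c * η - 1 / b)
          = (2 * t * η + η ^ 2 * (1 + Real.sqrt 2)) * a * b - (a - η * t) := by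
        linear_combination η * hcab - hab1
      linarith [hexp ▸ hmul]
    have hrw : (2 * t * η + η ^ 2 * (1 + Real.sqrt 2)) * (a / (a - η * t)) * b
        = ((2 * t * η + η ^ 2 * (1 + Real.sqrt 2)) * a * b) / (a - η * t) := by
      ring
    rw [hrw, div_lt_one (by linarith)]
    exact key

/-- Precision matrix error: if `W₂(p, p̃) ≤ η` with
`0 < η < min(√(‖Σ‖/2), f(‖Σ‖, ‖Σ⁻¹‖))`, then with
`γ = (2√(2‖Σ‖) η + η²(1+√2)) · ‖Σ‖/(‖Σ‖ − η√(2‖Σ‖))` one has `γ‖Σ⁻¹‖ < 1` and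
`‖Σ̃⁻¹ − Σ⁻¹‖ ≤ γ‖Σ⁻¹‖²/(1 − γ‖Σ⁻¹‖)`. -/
theorem precision_matrix_error {d : ℕ}
    (p q : Measure (EuclideanSpace ℝ (Fin d)))
    [IsProbabilityMeasure p] [IsProbabilityMeasure q]
    (hp : MemLp id 2 p) (hq : MemLp id 2 q)
    (hSig : IsUnit (covMatrix p))
    (η : ℝ) (hη0 : 0 < η)
    (hη : η < min (Real.sqrt (‖covMatrix p‖ / 2))
      (etaThreshold ‖covMatrix p‖ ‖(covMatrix p)⁻¹‖))
    (hW : W2 p q ≤ η) :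
    let γ : ℝ := (2 * Real.sqrt (2 * ‖covMatrix p‖) * η + η ^ 2 * (1 + Real.sqrt 2)) *
      (‖covMatrix p‖ / (‖covMatrix p‖ - η * Real.sqrt (2 * ‖covMatrix p‖)))
    γ * ‖(covMatrix p)⁻¹‖ < 1 ∧
      ‖(covMatrix q)⁻¹ - (covMatrix p)⁻¹‖ ≤
        γ * ‖(covMatrix p)⁻¹‖ ^ 2 / (1 - γ * ‖(covMatrix p)⁻¹‖) := by
  intro γ
  have hγdef : γ = (2 * Real.sqrt (2 * ‖covMatrix p‖) * η + η ^ 2 * (1 + Real.sqrt 2)) *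
      (‖covMatrix p‖ / (‖covMatrix p‖ - η * Real.sqrt (2 * ‖covMatrix p‖))) := rfl
  have h1 : η < Real.sqrt (‖covMatrix p‖ / 2) := lt_of_lt_of_le hη (min_le_left _ _)
  have h2 : η < etaThreshold ‖covMatrix p‖ ‖(covMatrix p)⁻¹‖ :=
    lt_of_lt_of_le hη (min_le_right _ _)
  have ha : 0 < ‖covMatrix p‖ := by
    rcases (norm_nonneg (covMatrix p)).lt_or_eq with h | h
    · exact h
    · exfalso
      rw [← h] at h1
      simp only [zero_div, Real.sqrt_zero] at h1
      linarith
  have hdet : IsUnit (covMatrix p).det := (Matrix.isUnit_iff_isUnit_det _).mp hSig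
  have hb : 0 < ‖(covMatrix p)⁻¹‖ := by
    rcases (norm_nonneg ((covMatrix p)⁻¹)).lt_or_eq with h | h
    · exact h
    · exfalso
      have hinv0 : (covMatrix p)⁻¹ = 0 := by
        rw [← norm_eq_zero]; exact h.symm
      have h10 : (1 : Matrix (Fin d) (Fin d) ℝ) = 0 := by
        have h11 := Matrix.nonsing_inv_mul (covMatrix p) hdet
        rw [hinv0, Matrix.zero_mul] at h11
        exact h11.symm
      have hcov0 : covMatrix p = 0 := by
        have h12 := congrArg (fun M : Matrix (Fin d) (Fin d) ℝ => M * covMatrix p) h10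
        simpa using h12
      rw [hcov0, norm_zero] at ha
      exact lt_irrefl 0 ha
  obtain ⟨hden, hKγ, hγb⟩ := alg_part ‖covMatrix p‖ ‖(covMatrix p)⁻¹‖ η ha hb hη0 h1 h2
  rw [← hγdef] at hKγ hγb
  -- extract a near-optimal coupling and bound the covariance difference
  set S : Set ℝ := { r : ℝ | 0 ≤ r ∧
    ∃ π : Measure (EuclideanSpace ℝ (Fin d) × EuclideanSpace ℝ (Fin d)),
      π.map Prod.fst = p ∧ π.map Prod.snd = q ∧
      (∫ z, ‖z.1 - z.2‖ ^ 2 ∂π) = r ^ 2 } with hS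
  have hne : S.Nonempty := by
    refine ⟨Real.sqrt (∫ z, ‖z.1 - z.2‖ ^ 2 ∂(p.prod q)), Real.sqrt_nonneg _, p.prod q, ?_, ?_, ?_⟩
    · rw [Measure.map_fst_prod]
      simp [measure_univ]
    · rw [Measure.map_snd_prod]
      simp [measure_univ]
    · exact (Real.sq_sqrt (integral_nonneg fun z => sq_nonneg _)).symm
  have hWS : sInf S ≤ η := hW
  have hEbound : ‖covMatrix q - covMatrix p‖
      ≤ 2 * Real.sqrt ‖covMatrix p‖ * η + η ^ 2 := by
    refine le_of_forall_pos_le_add fun ε' hε' => ?_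
    set ε : ℝ := min (ε' / (2 * Real.sqrt ‖covMatrix p‖ + 2 * η + 1)) 1 with hε
    have hd0 : 0 < 2 * Real.sqrt ‖covMatrix p‖ + 2 * η + 1 := by positivity
    have hε0 : 0 < ε := by
      apply lt_min
      · positivity
      · norm_num
    obtain ⟨r, hrS, hrlt⟩ := Real.lt_sInf_add_pos hne hε0
    obtain ⟨hr0, π, hfst, hsnd, hcost⟩ := hrS
    have hcd := cov_diff p q hp hq π hfst hsnd r hr0 hcost
    have hrle : r ≤ η + ε := by linarith
    have hε1 : ε ≤ 1 := min_le_right _ _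
    have hε2 : ε * (2 * Real.sqrt ‖covMatrix p‖ + 2 * η + 1) ≤ ε' := by
      have := min_le_left (ε' / (2 * Real.sqrt ‖covMatrix p‖ + 2 * η + 1)) 1
      rw [hε]
      calc min (ε' / (2 * Real.sqrt ‖covMatrix p‖ + 2 * η + 1)) 1
            * (2 * Real.sqrt ‖covMatrix p‖ + 2 * η + 1)
          ≤ (ε' / (2 * Real.sqrt ‖covMatrix p‖ + 2 * η + 1))
            * (2 * Real.sqrt ‖covMatrix p‖ + 2 * η + 1) := by
            exact mul_le_mul_of_nonneg_right this hd0.le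
      _ = ε' := by field_simp
    have hsq : 0 ≤ Real.sqrt ‖covMatrix p‖ := Real.sqrt_nonneg _
    calc ‖covMatrix q - covMatrix p‖ ≤ 2 * Real.sqrt ‖covMatrix p‖ * r + r ^ 2 := hcd
    _ ≤ 2 * Real.sqrt ‖covMatrix p‖ * (η + ε) + (η + ε) ^ 2 := by nlinarith
    _ ≤ 2 * Real.sqrt ‖covMatrix p‖ * η + η ^ 2 + ε' := by nlinarith
  have hE : ‖covMatrix q - covMatrix p‖ ≤ γ := le_trans hEbound hKγ
  exact ⟨hγb, inv_perturb (covMatrix p) (covMatrix q) hSig γ hE hγb⟩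
end
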